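/- arXiv:2511.08160 — 2 statements merged into one kernel-verified Lean document; each statement's English description precedes it below -/
import Mathlib

section
/- In any fair-division-with-social-impact instance with additive social impacts, if A is a SIM allocation, then for every pair of agents i, j it holds that s_i(A_j) ≤ s_j(A_j). Consequently, if in the definition of SA-EF the strict inequality s_i(A_j) < s_j(A_j) is replaced by the non-strict inequality s_i(A_j) ≤ s_j(A_j), then every SIM allocation satisfies the resulting condition for every pair of agents. -/
open Finset

variable {N M : Type*}

/-- The bundle of agent `i` under allocation `A` (items mapped to `i`). -/
def bundle [Fintype M] [DecidableEq N] (A : M → N) (i : N) : Finset M :=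
  Finset.univ.filter fun g => A g = i

/-- The (additive) value of a bundle `S` under the item-values `f`. -/
def val (f : M → ℕ) (S : Finset M) : ℕ := ∑ g ∈ S, f g

/-- An allocation is social impact maximizing (SIM). -/
def SIM [Fintype N] [Fintype M] [DecidableEq N] (s : N → M → ℕ) (A : M → N) : Prop :=
  ∀ A' : M → N, ∑ i : N, val (s i) (bundle A i) ≥ ∑ i : N, val (s i) (bundle A' i)

lemma sum_val_eq [Fintype N] [Fintype M] [DecidableEq N]
    (s : N → M → ℕ) (B : M → N) :
    ∑ i : N, _root_.val (s i) (bundle B i) = ∑ g : M, s (B g) g := by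
  unfold _root_.val bundle
  rw [← Finset.sum_fiberwise Finset.univ B (fun g => s (B g) g)]
  refine Finset.sum_congr rfl fun i _ => Finset.sum_congr rfl fun g hg => ?_
  simp only [Finset.mem_filter] at hg
  rw [hg.2]

/-- In every SIM allocation, `s_i(A_j) ≤ s_j(A_j)` for every pair of agents, and
consequently every SIM allocation satisfies, for every pair of agents, the SA-EF
condition with the strict inequality replaced by a non-strict one. -/
theorem sim_impact_le_and_weak_saef
    [Fintype N] [Fintype M] [DecidableEq N]
    (v s : N → M → ℕ) (A : M → N) (hA : SIM s A) :
    (∀ i j : N, val (s i) (bundle A j) ≤ val (s j) (bundle A j)) ∧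
    (∀ i j : N, val (v i) (bundle A i) ≥ val (v i) (bundle A j) ∨
      val (s i) (bundle A j) ≤ val (s j) (bundle A j)) := by
  have key : ∀ i j : N, val (s i) (bundle A j) ≤ val (s j) (bundle A j) := by
    intro i j
    have h := hA (fun g => if A g = j then i else A g)
    rw [sum_val_eq, sum_val_eq] at h
    have hsplit : ∀ (f : M → ℕ),
        ∑ g : M, f g = ∑ g ∈ bundle A j, f g + ∑ g ∈ Finset.univ.filter (fun g => ¬ A g = j), f g := by
      intro f
      rw [← Finset.sum_filter_add_sum_filter_not Finset.univ (fun g => A g = j) f]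
      rfl
    rw [hsplit (fun g => s (A g) g), hsplit (fun g => s (if A g = j then i else A g) g)] at h
    have e1 : ∑ g ∈ bundle A j, s (A g) g = _root_.val (s j) (bundle A j) := by
      refine Finset.sum_congr rfl fun g hg => ?_
      simp only [bundle, Finset.mem_filter] at hg
      rw [hg.2]
    have e2 : ∑ g ∈ bundle A j, s (if A g = j then i else A g) g = _root_.val (s i) (bundle A j) := by
      refine Finset.sum_congr rfl fun g hg => ?_
      simp only [bundle, Finset.mem_filter] at hg
      rw [if_pos hg.2]
    have e3 : ∑ g ∈ Finset.univ.filter (fun g => ¬ A g = j), s (if A g = j then i else A g) g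
        = ∑ g ∈ Finset.univ.filter (fun g => ¬ A g = j), s (A g) g := by
      refine Finset.sum_congr rfl fun g hg => ?_
      simp only [Finset.mem_filter] at hg
      rw [if_neg hg.2]
    rw [e1, e2, e3] at h
    omega
  exact ⟨key, fun i j => Or.inr (key i j)⟩
end

section
/- Let ℓ > 4 and let w_1, …, w_{2ℓ} be positive integers with ∑_{j∈[2ℓ]} w_j = 2t such that every J ⊆ [2ℓ] with |J| < ℓ satisfies ∑_{j∈J} w_j < t. Construct the fair-division-with-social-impact instance with two agents a_1, a_2 and items g_1, …, g_{2ℓ}, G_1, G_2, where for both agents v(g_j) = w_j and s(g_j) = 1; v_{a_1}(G_1) = 0, s_{a_1}(G_1) = 1, v_{a_2}(G_1) = t, s_{a_2}(G_1) = 0; and v_{a_1}(G_2) = t, s_{a_1}(G_2) = 0, v_{a_2}(G_2) = 0, s_{a_2}(G_2) = 1. Then this instance admits an allocation that is simultaneously SIM and WSA-EF1 if and only if there exists J ⊆ [2ℓ] with |J| = ℓ and ∑_{j∈J} w_j = t. -/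
open Finset

variable {N M : Type*}

/-- WSA-EF1: for every pair of agents `i, j`, either there is an item `g` with
`v_i(A_i) ≥ v_i(A_j \ {g})`, or `v_i(A_j) · s_i(A_j) ≤ v_i(A_i) · s_j(A_j)`. -/
def WSAEF1 [Fintype M] [DecidableEq N] [DecidableEq M]
    (v s : N → M → ℕ) (A : M → N) : Prop :=
  ∀ i j : N,
    (∃ g : M, val (v i) (bundle A i) ≥ val (v i) ((bundle A j).erase g)) ∨
    val (v i) (bundle A j) * val (s i) (bundle A j) ≤
      val (v i) (bundle A i) * val (s j) (bundle A j)

lemma val_bundle_eq [Fintype M] [DecidableEq N] (f : M → ℕ) (A : M → N) (i : N) :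
    val f (bundle A i) = ∑ g, if A g = i then f g else 0 := by
  unfold _root_.val bundle; rw [Finset.sum_filter]

lemma sum_val_bundle [Fintype M] [Fintype N] [DecidableEq N]
    (s : N → M → ℕ) (A : M → N) :
    ∑ i : N, val (s i) (bundle A i) = ∑ g : M, s (A g) g := by
  rw [← Finset.sum_fiberwise Finset.univ A (fun g => s (A g) g)]
  refine Finset.sum_congr rfl fun i _ => ?_
  unfold _root_.val bundle
  refine Finset.sum_congr rfl fun g hg => ?_
  simp only [Finset.mem_filter] at hg
  rw [hg.2]

lemma val_le_erase_add [DecidableEq M] (f : M → ℕ) (S : Finset M) (g : M) (t : ℕ)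
    (hf : ∀ x, f x ≤ t) : val f S ≤ val f (S.erase g) + t := by
  by_cases hg : g ∈ S
  · unfold _root_.val; rw [← Finset.sum_erase_add S f hg]
    exact Nat.add_le_add_left (hf g) _
  · rw [Finset.erase_eq_of_notMem hg]
    exact Nat.le_add_right _ _

lemma arith_aux (S0 S1 c1 t : ℕ) (hsum : S0 + S1 = 2 * t)
    (hc : c1 = 0 → S1 = 0) (hprod : (S1 + t) * c1 ≤ S0 * (c1 + 1)) : S1 ≤ S0 := by
  by_contra hlt
  push_neg at hlt
  have hc1 : 0 < c1 := by
    rcases Nat.eq_zero_or_pos c1 with h | h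
    · have := hc h; omega
    · exact h
  have hS0t : S0 < t := by omega
  have : S0 * (c1 + 1) < S0 * (c1 + 1) := by
    calc S0 * (c1 + 1) = S0 * c1 + S0 := by ring
      _ < S0 * c1 + t := Nat.add_lt_add_left hS0t _
      _ ≤ S1 * c1 + t * c1 := Nat.add_le_add (Nat.mul_le_mul_right _ hlt.le) (Nat.le_mul_of_pos_right _ hc1)
      _ = (S1 + t) * c1 := by ring
      _ ≤ S0 * (c1 + 1) := hprod
  exact lt_irrefl _ this

lemma fin2_not_zero {a : Fin 2} : ¬ a = 0 ↔ a = 1 := by fin_cases a <;> simp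


/-- Equitable-partition reduction for WSA-EF1: two agents `0 = a₁`, `1 = a₂`;
items `Sum.inl j = g_j` (value `w j`, impact `1` for both) and `Sum.inr k = G_{k+1}`
(`v_{a₁}(G₁) = 0, s_{a₁}(G₁) = 1, v_{a₂}(G₁) = t, s_{a₂}(G₁) = 0` and
`v_{a₁}(G₂) = t, s_{a₁}(G₂) = 0, v_{a₂}(G₂) = 0, s_{a₂}(G₂) = 1`).
A SIM and WSA-EF1 allocation exists iff there is `J` of size `ℓ` with
`∑_{j ∈ J} w_j = t`. -/
theorem sim_wsaef1_iff_equitable_partition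
    (ℓ t : ℕ) (hℓ : 4 < ℓ) (w : Fin (2 * ℓ) → ℕ) (hw : ∀ j, 0 < w j)
    (hsum : ∑ j, w j = 2 * t)
    (hsmall : ∀ J : Finset (Fin (2 * ℓ)), J.card < ℓ → ∑ j ∈ J, w j < t) :
    (∃ A : (Fin (2 * ℓ) ⊕ Fin 2) → Fin 2,
        SIM (fun i : Fin 2 => Sum.elim (fun _ : Fin (2 * ℓ) => 1)
          (fun k : Fin 2 => if k = i then 1 else 0)) A ∧
        WSAEF1 (fun i : Fin 2 => Sum.elim (fun j : Fin (2 * ℓ) => w j)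
          (fun k : Fin 2 => if k = i then 0 else t))
          (fun i : Fin 2 => Sum.elim (fun _ : Fin (2 * ℓ) => 1)
          (fun k : Fin 2 => if k = i then 1 else 0)) A) ↔
    (∃ J : Finset (Fin (2 * ℓ)), J.card = ℓ ∧ ∑ j ∈ J, w j = t) := by
  have ht : 0 < t := by
    have h1 : (0:ℕ) < ∑ j, w j := by
      refine Finset.sum_pos (fun j _ => hw j) ⟨⟨0, by omega⟩, Finset.mem_univ _⟩
    omega
  have hwt : ∀ j, w j < t := by
    intro j
    have := hsmall {j} (by simp; omega)
    simpa using this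
  constructor
  · rintro ⟨A, hSIM, hEF⟩
    have hmax := hSIM (fun g => Sum.elim (fun j => A (Sum.inl j)) (fun k => k) g)
    rw [sum_val_bundle, sum_val_bundle, Fintype.sum_sum_type, Fintype.sum_sum_type,
      Fin.sum_univ_two, Fin.sum_univ_two] at hmax
    simp only [Sum.elim_inl, Sum.elim_inr, if_true, eq_self_iff_true] at hmax
    have hmax2 := Nat.le_of_add_le_add_left hmax
    have h0 : A (Sum.inr 0) = 0 := by
      by_cases hc : (0:Fin 2) = A (Sum.inr 0)
      · exact hc.symm
      · rw [if_neg hc] at hmax2; split_ifs at hmax2 <;> omega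
    have h1 : A (Sum.inr 1) = 1 := by
      by_cases hc : (1:Fin 2) = A (Sum.inr 1)
      · exact hc.symm
      · rw [if_neg hc] at hmax2; split_ifs at hmax2 <;> omega
    have hfilK : Finset.univ.filter (fun j => ¬ A (Sum.inl j) = 0)
        = Finset.univ.filter (fun j => A (Sum.inl j) = 1) :=
      Finset.filter_congr fun j _ => fin2_not_zero
    have hpart : (∑ x, if A (Sum.inl x) = 0 then w x else 0)
        + (∑ x, if A (Sum.inl x) = 1 then w x else 0) = 2 * t := by
      rw [← Finset.sum_filter, ← Finset.sum_filter, ← hfilK,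
        Finset.sum_filter_add_sum_filter_not, hsum]
    have hcard : (∑ x, if A (Sum.inl x) = 0 then (1:ℕ) else 0)
        + (∑ x, if A (Sum.inl x) = 1 then (1:ℕ) else 0) = 2 * ℓ := by
      rw [← Finset.sum_filter, ← Finset.sum_filter, Finset.sum_const, Finset.sum_const,
        smul_eq_mul, smul_eq_mul, mul_one, mul_one, ← hfilK,
        Finset.card_filter_add_card_filter_not, Finset.card_univ, Fintype.card_fin]
    have hzero : ∀ i : Fin 2, (∑ x, if A (Sum.inl x) = i then (1:ℕ) else 0) = 0 →
        (∑ x, if A (Sum.inl x) = i then w x else 0) = 0 := by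
      intro i h
      rw [Finset.sum_eq_zero_iff] at h ⊢
      intro x hx
      have hh := h x hx
      split_ifs at hh ⊢ with hc
      all_goals omega
    have hbound0 : ∀ x : Fin (2 * ℓ) ⊕ Fin 2,
        Sum.elim (fun j => w j) (fun k : Fin 2 => if k = (0:Fin 2) then 0 else t) x ≤ t := by
      rintro (j | k)
      · exact (hwt j).le
      · simp only [Sum.elim_inr]; split_ifs <;> omega
    have hbound1 : ∀ x : Fin (2 * ℓ) ⊕ Fin 2,
        Sum.elim (fun j => w j) (fun k : Fin 2 => if k = (1:Fin 2) then 0 else t) x ≤ t := by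
      rintro (j | k)
      · exact (hwt j).le
      · simp only [Sum.elim_inr]; split_ifs <;> omega
    have hv01 : val (Sum.elim (fun j => w j) fun k : Fin 2 => if k = (0:Fin 2) then 0 else t)
        (bundle A 1) = (∑ x, if A (Sum.inl x) = 1 then w x else 0) + t := by
      rw [val_bundle_eq, Fintype.sum_sum_type, Fin.sum_univ_two]
      simp only [Sum.elim_inl, Sum.elim_inr, h0, h1, if_true, eq_self_iff_true, if_false,
        (by decide : ((1:Fin 2) = 0) = False), (by decide : ((0:Fin 2) = 1) = False)]
      omega
    have hv10 : val (Sum.elim (fun j => w j) fun k : Fin 2 => if k = (1:Fin 2) then 0 else t)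
        (bundle A 0) = (∑ x, if A (Sum.inl x) = 0 then w x else 0) + t := by
      rw [val_bundle_eq, Fintype.sum_sum_type, Fin.sum_univ_two]
      simp only [Sum.elim_inl, Sum.elim_inr, h0, h1, if_true, eq_self_iff_true, if_false,
        (by decide : ((1:Fin 2) = 0) = False), (by decide : ((0:Fin 2) = 1) = False)]
      omega
    have h01 := hEF 0 1
    simp only [val_bundle_eq, Fintype.sum_sum_type, Fin.sum_univ_two, Sum.elim_inl,
      Sum.elim_inr, h0, h1, if_true, eq_self_iff_true, if_false,
      (by decide : ((1:Fin 2) = 0) = False), (by decide : ((0:Fin 2) = 1) = False),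
      add_zero, zero_add] at h01
    have hle1 : (∑ x, if A (Sum.inl x) = 1 then w x else 0)
        ≤ (∑ x, if A (Sum.inl x) = 0 then w x else 0) := by
      rcases h01 with ⟨g, hg⟩ | hprod
      · have hb := val_le_erase_add _ (bundle A 1) g t hbound0
        rw [hv01] at hb
        omega
      · exact arith_aux _ _ _ t hpart (hzero 1) hprod
    have h10 := hEF 1 0
    simp only [val_bundle_eq, Fintype.sum_sum_type, Fin.sum_univ_two, Sum.elim_inl,
      Sum.elim_inr, h0, h1, if_true, eq_self_iff_true, if_false,
      (by decide : ((1:Fin 2) = 0) = False), (by decide : ((0:Fin 2) = 1) = False),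
      add_zero, zero_add] at h10
    have hle0 : (∑ x, if A (Sum.inl x) = 0 then w x else 0)
        ≤ (∑ x, if A (Sum.inl x) = 1 then w x else 0) := by
      rcases h10 with ⟨g, hg⟩ | hprod
      · have hb := val_le_erase_add _ (bundle A 0) g t hbound1
        rw [hv10] at hb
        omega
      · exact arith_aux _ _ _ t (by omega) (hzero 0) hprod
    have hS0t : (∑ x, if A (Sum.inl x) = 0 then w x else 0) = t := by omega
    refine ⟨Finset.univ.filter (fun j => A (Sum.inl j) = 0), ?_, ?_⟩
    · have hf0 : ∑ j ∈ Finset.univ.filter (fun j => A (Sum.inl j) = 0), w j = t := by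
        rw [Finset.sum_filter]; omega
      have hf1 : ∑ j ∈ Finset.univ.filter (fun j => A (Sum.inl j) = 1), w j = t := by
        rw [Finset.sum_filter]; omega
      have hcf : (Finset.univ.filter (fun j => A (Sum.inl j) = 0)).card
          + (Finset.univ.filter (fun j => A (Sum.inl j) = 1)).card = 2 * ℓ := by
        rw [← hfilK, Finset.card_filter_add_card_filter_not, Finset.card_univ,
          Fintype.card_fin]
      by_contra hne
      rcases Nat.lt_or_ge (Finset.univ.filter (fun j => A (Sum.inl j) = 0)).card ℓ with h | h
      · have := hsmall _ h; omega
      · have hlt : (Finset.univ.filter (fun j => A (Sum.inl j) = 1)).card < ℓ := by omega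
        have := hsmall _ hlt; omega
    · rw [Finset.sum_filter]; omega
  · rintro ⟨J, hJcard, hJsum⟩
    have hfilJ : Finset.univ.filter (fun j => j ∈ J) = J := by ext j; simp
    have hKsum : ∑ j ∈ Finset.univ.filter (fun j => j ∉ J), w j = t := by
      have hp := Finset.sum_filter_add_sum_filter_not Finset.univ (fun j => j ∈ J) w
      rw [hfilJ, hJsum, hsum] at hp
      omega
    have hV0 : (∑ x, if x ∈ J then w x else 0) = t := by
      rw [← Finset.sum_filter, hfilJ]; exact hJsum
    have hV1 : (∑ x, if x ∉ J then w x else 0) = t := by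
      rw [← Finset.sum_filter]; exact hKsum
    have hc0 : ∀ x : Fin (2 * ℓ), ((if x ∈ J then (0:Fin 2) else 1) = 0) = (x ∈ J) := by
      intro x; split_ifs with h <;> simp [h]
    have hc1 : ∀ x : Fin (2 * ℓ), ((if x ∈ J then (0:Fin 2) else 1) = 1) = (x ∉ J) := by
      intro x; split_ifs with h <;> simp [h]
    refine ⟨fun g => Sum.elim (fun j => if j ∈ J then (0:Fin 2) else 1) (fun k => k) g, ?_, ?_⟩
    · intro A'
      rw [sum_val_bundle, sum_val_bundle, Fintype.sum_sum_type, Fintype.sum_sum_type,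
        Fin.sum_univ_two, Fin.sum_univ_two]
      simp only [Sum.elim_inl, Sum.elim_inr]
      rw [ge_iff_le]
      refine Nat.add_le_add_left ?_ _
      split_ifs <;> omega
    · intro i j
      by_cases hij : i = j
      · subst hij
        left
        exact ⟨Sum.inr 0, Finset.sum_le_sum_of_subset (Finset.erase_subset _ _)⟩
      · left
        refine ⟨Sum.inr j, ?_⟩
        have hcases : (i = 0 ∧ j = 1) ∨ (i = 1 ∧ j = 0) := by
          fin_cases i <;> fin_cases j <;> simp_all
        rcases hcases with ⟨hi, hj⟩ | ⟨hi, hj⟩ <;> subst hi <;> subst hj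
        · have hmem : (Sum.inr 1 : Fin (2 * ℓ) ⊕ Fin 2) ∈ bundle (fun g => Sum.elim (fun j => if j ∈ J then (0:Fin 2) else 1) (fun k : Fin 2 => k) g) 1 := by
            simp [bundle]
          have he := Finset.sum_erase_add (bundle (fun g => Sum.elim (fun j => if j ∈ J then (0:Fin 2) else 1) (fun k : Fin 2 => k) g) 1) (Sum.elim (fun j => w j) fun k : Fin 2 => if k = (0:Fin 2) then 0 else t) hmem
          simp only [Sum.elim_inr, (by decide : (((1:Fin 2)) = 0) = False), if_false] at he
          have hB1 : (∑ x ∈ bundle (fun g => Sum.elim (fun j => if j ∈ J then (0:Fin 2) else 1) (fun k : Fin 2 => k) g) 1, (Sum.elim (fun j => w j) fun k : Fin 2 => if k = (0:Fin 2) then 0 else t) x) = t + t := by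
            show val (Sum.elim (fun j => w j) fun k : Fin 2 => if k = (0:Fin 2) then 0 else t) (bundle (fun g => Sum.elim (fun j => if j ∈ J then (0:Fin 2) else 1) (fun k : Fin 2 => k) g) 1) = t + t
            rw [val_bundle_eq, Fintype.sum_sum_type, Fin.sum_univ_two]
            simp only [Sum.elim_inl, Sum.elim_inr, hc1, hV1,
              (by decide : (((1:Fin 2)) = 0) = False), (by decide : (((0:Fin 2)) = 1) = False),
              if_true, eq_self_iff_true, if_false]
            omega
          have hB0 : (∑ x ∈ bundle (fun g => Sum.elim (fun j => if j ∈ J then (0:Fin 2) else 1) (fun k : Fin 2 => k) g) 0, (Sum.elim (fun j => w j) fun k : Fin 2 => if k = (0:Fin 2) then 0 else t) x) = t := by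
            show val (Sum.elim (fun j => w j) fun k : Fin 2 => if k = (0:Fin 2) then 0 else t) (bundle (fun g => Sum.elim (fun j => if j ∈ J then (0:Fin 2) else 1) (fun k : Fin 2 => k) g) 0) = t
            rw [val_bundle_eq, Fintype.sum_sum_type, Fin.sum_univ_two]
            simp only [Sum.elim_inl, Sum.elim_inr, hc0, hV0,
              (by decide : (((1:Fin 2)) = 0) = False), (by decide : (((0:Fin 2)) = 1) = False),
              if_true, eq_self_iff_true, if_false]
            omega
          rw [ge_iff_le]
          show (∑ x ∈ (bundle (fun g => Sum.elim (fun j => if j ∈ J then (0:Fin 2) else 1) (fun k : Fin 2 => k) g) 1).erase (Sum.inr 1), (Sum.elim (fun j => w j) fun k : Fin 2 => if k = (0:Fin 2) then 0 else t) x)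
            ≤ ∑ x ∈ bundle (fun g => Sum.elim (fun j => if j ∈ J then (0:Fin 2) else 1) (fun k : Fin 2 => k) g) 0, (Sum.elim (fun j => w j) fun k : Fin 2 => if k = (0:Fin 2) then 0 else t) x
          omega
        · have hmem : (Sum.inr 0 : Fin (2 * ℓ) ⊕ Fin 2) ∈ bundle (fun g => Sum.elim (fun j => if j ∈ J then (0:Fin 2) else 1) (fun k : Fin 2 => k) g) 0 := by
            simp [bundle]
          have he := Finset.sum_erase_add (bundle (fun g => Sum.elim (fun j => if j ∈ J then (0:Fin 2) else 1) (fun k : Fin 2 => k) g) 0) (Sum.elim (fun j => w j) fun k : Fin 2 => if k = (1:Fin 2) then 0 else t) hmem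
          simp only [Sum.elim_inr, (by decide : (((0:Fin 2)) = 1) = False), if_false] at he
          have hB0 : (∑ x ∈ bundle (fun g => Sum.elim (fun j => if j ∈ J then (0:Fin 2) else 1) (fun k : Fin 2 => k) g) 0, (Sum.elim (fun j => w j) fun k : Fin 2 => if k = (1:Fin 2) then 0 else t) x) = t + t := by
            show val (Sum.elim (fun j => w j) fun k : Fin 2 => if k = (1:Fin 2) then 0 else t) (bundle (fun g => Sum.elim (fun j => if j ∈ J then (0:Fin 2) else 1) (fun k : Fin 2 => k) g) 0) = t + t
            rw [val_bundle_eq, Fintype.sum_sum_type, Fin.sum_univ_two]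
            simp only [Sum.elim_inl, Sum.elim_inr, hc0, hV0,
              (by decide : (((1:Fin 2)) = 0) = False), (by decide : (((0:Fin 2)) = 1) = False),
              if_true, eq_self_iff_true, if_false]
            omega
          have hB1 : (∑ x ∈ bundle (fun g => Sum.elim (fun j => if j ∈ J then (0:Fin 2) else 1) (fun k : Fin 2 => k) g) 1, (Sum.elim (fun j => w j) fun k : Fin 2 => if k = (1:Fin 2) then 0 else t) x) = t := by
            show val (Sum.elim (fun j => w j) fun k : Fin 2 => if k = (1:Fin 2) then 0 else t) (bundle (fun g => Sum.elim (fun j => if j ∈ J then (0:Fin 2) else 1) (fun k : Fin 2 => k) g) 1) = t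
            rw [val_bundle_eq, Fintype.sum_sum_type, Fin.sum_univ_two]
            simp only [Sum.elim_inl, Sum.elim_inr, hc1, hV1,
              (by decide : (((1:Fin 2)) = 0) = False), (by decide : (((0:Fin 2)) = 1) = False),
              if_true, eq_self_iff_true, if_false]
            omega
          rw [ge_iff_le]
          show (∑ x ∈ (bundle (fun g => Sum.elim (fun j => if j ∈ J then (0:Fin 2) else 1) (fun k : Fin 2 => k) g) 0).erase (Sum.inr 0), (Sum.elim (fun j => w j) fun k : Fin 2 => if k = (1:Fin 2) then 0 else t) x)
            ≤ ∑ x ∈ bundle (fun g => Sum.elim (fun j => if j ∈ J then (0:Fin 2) else 1) (fun k : Fin 2 => k) g) 1, (Sum.elim (fun j => w j) fun k : Fin 2 => if k = (1:Fin 2) then 0 else t) x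
          omega
end
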